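/- Let a,b,c,d,z be real numbers with |a|, |b|, |c|, |d| < 1 and z²·|ac| < 1, and set q = abcd. Then for every integer N ≥ 0 the series Φ_N(a,b,c,d;z) = Σ_λ ω(λ) z^{ℓ(λ)}, summed over all partitions λ whose parts are all ≤ N, converges absolutely and Φ_N(a,b,c,d;z) = Ψ_N(a,b,c,d;z) / ((z²q;q)_{⌊N/2⌋} · (z²ac;q)_{⌈N/2⌉}). -/

import Mathlib

open scoped BigOperators

/-- A partition: a weakly decreasing sequence of nonnegative integers (0-indexed:
`parts i` is λ_{i+1}) with finitely many nonzero terms. -/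
structure IntPartition where
  parts : ℕ → ℕ
  antitone : Antitone parts
  fin_support : ∃ N, ∀ n, N ≤ n → parts n = 0

namespace IntPartition

/-- Σ_{i≥1} ⌈λ_{2i-1}/2⌉ (odd-indexed rows, 1-based; ceiling). -/
noncomputable def statA (l : IntPartition) : ℕ := ∑ᶠ i : ℕ, (l.parts (2 * i) + 1) / 2
/-- Σ_{i≥1} ⌊λ_{2i-1}/2⌋. -/
noncomputable def statB (l : IntPartition) : ℕ := ∑ᶠ i : ℕ, l.parts (2 * i) / 2
/-- Σ_{i≥1} ⌈λ_{2i}/2⌉. -/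
noncomputable def statC (l : IntPartition) : ℕ := ∑ᶠ i : ℕ, (l.parts (2 * i + 1) + 1) / 2
/-- Σ_{i≥1} ⌊λ_{2i}/2⌋. -/
noncomputable def statD (l : IntPartition) : ℕ := ∑ᶠ i : ℕ, l.parts (2 * i + 1) / 2

/-- ℓ(λ): the number of nonzero parts. -/
noncomputable def length (l : IntPartition) : ℕ := Set.ncard (Function.support l.parts)

/-- |λ|: the sum of all parts. -/
noncomputable def size (l : IntPartition) : ℕ := ∑ᶠ i : ℕ, l.parts i

/-- A partition is strict if its nonzero parts are pairwise distinct. -/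
def Strict (l : IntPartition) : Prop := ∀ i, l.parts (i + 1) ≠ 0 → l.parts (i + 1) < l.parts i

/-- The Andrews–Stanley four-parameter weight ω(λ). -/
noncomputable def weight {R : Type*} [CommRing R] (a b c d : R) (l : IntPartition) : R :=
  a ^ l.statA * b ^ l.statB * c ^ l.statC * d ^ l.statD

/-- O(λ): the number of odd parts. -/
noncomputable def oddParts (l : IntPartition) : ℕ := Set.ncard {i : ℕ | Odd (l.parts i)}

/-- O(λ'): the number of odd parts of the conjugate partition. -/
noncomputable def conjOddParts (l : IntPartition) : ℕ :=
  Set.ncard {j : ℕ | Odd (Set.ncard {i : ℕ | j + 1 ≤ l.parts i})}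

end IntPartition

/-- The q-shifted factorial (x;q)_n. -/
def poch {R : Type*} [CommRing R] (x q : R) (n : ℕ) : R :=
  ∏ k ∈ Finset.range n, (1 - x * q ^ k)

/-- The infinite q-shifted factorial (x;q)_∞ (as an infinite product of reals). -/
noncomputable def pochInf (x q : ℝ) : ℝ := ∏' k : ℕ, (1 - x * q ^ k)

/-- The basic hypergeometric series ₂φ₁(α,β;γ;q,w). -/
noncomputable def phi21 (α β γ q w : ℝ) : ℝ :=
  ∑' n : ℕ, poch α q n * poch β q n / (poch q q n * poch γ q n) * w ^ n

/-- Absolute convergence of the ₂φ₁ series. -/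
def phi21Summable (α β γ q w : ℝ) : Prop :=
  Summable (fun n : ℕ => poch α q n * poch β q n / (poch q q n * poch γ q n) * w ^ n)

/-- The Gaussian binomial coefficient [N choose k]_q. -/
noncomputable def gauss {K : Type*} [Field K] (q : K) (N k : ℕ) : K :=
  poch q q N / (poch q q k * poch q q (N - k))

/-- Ψ_N(a,b,c,d;z): the generating function of strict partitions with parts ≤ N. -/
noncomputable def Psi {R : Type*} [CommRing R] (a b c d z : R) (N : ℕ) : R :=
  ∑ᶠ μ : {μ : IntPartition // μ.Strict ∧ μ.parts 0 ≤ N},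
    IntPartition.weight a b c d μ.1 * z ^ μ.1.length


open Finset

namespace AS

variable {N : ℕ}

/-- number of parts ≥ j of the partition with multiplicities m (m k = multiplicity of k+1) -/
def cnt (m : Fin N → ℕ) (j : ℕ) : ℕ := ∑ k : Fin N, if j ≤ (k : ℕ) + 1 then m k else 0

lemma cnt_antitone (m : Fin N → ℕ) : Antitone (cnt m) := by
  intro j j' h
  apply Finset.sum_le_sum
  intro k _
  by_cases h2 : j' ≤ (k:ℕ)+1
  · simp [h2, le_trans h h2]
  · simp [h2]

/-- the i-th part (0-indexed) of the partition with multiplicities m -/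
def pts (m : Fin N → ℕ) (i : ℕ) : ℕ :=
  (Finset.univ.filter (fun k : Fin N => i < cnt m ((k : ℕ) + 1))).card

lemma pts_le (m : Fin N → ℕ) (i : ℕ) : pts m i ≤ N := by
  calc (Finset.univ.filter (fun k : Fin N => i < cnt m ((k : ℕ) + 1))).card
      ≤ (Finset.univ : Finset (Fin N)).card := Finset.card_filter_le _ _
    _ = N := by simp

lemma pts_antitone (m : Fin N → ℕ) : Antitone (pts m) := by
  intro i i' h
  apply Finset.card_le_card
  intro k hk
  simp only [Finset.mem_filter, Finset.mem_univ, true_and] at *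
  omega

/-- lower-set membership lemma -/
lemma lowerset_mem_iff {S : Finset (Fin N)} (h : ∀ k k' : Fin N, k' ≤ k → k ∈ S → k' ∈ S)
    (k : Fin N) : k ∈ S ↔ (k : ℕ) < S.card := by
  constructor
  · intro hk
    have hsub : Finset.Iic k ⊆ S := fun k' hk' => h k k' (Finset.mem_Iic.mp hk') hk
    have := Finset.card_le_card hsub
    rw [Fin.card_Iic] at this
    omega
  · intro hk
    by_contra hns
    have hsub : S ⊆ Finset.Iio k := by
      intro k' hk'
      rw [Finset.mem_Iio]
      rcases lt_or_ge k' k with h1 | h1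
      · exact h1
      · exact absurd (h k' k h1 hk') hns
    have := Finset.card_le_card hsub
    rw [Fin.card_Iio] at this
    omega

lemma mem_filter_pts (m : Fin N → ℕ) (i : ℕ) (k : Fin N) :
    (i < cnt m ((k : ℕ) + 1)) ↔ (k : ℕ) < pts m i := by
  have := lowerset_mem_iff (S := Finset.univ.filter (fun k : Fin N => i < cnt m ((k : ℕ) + 1)))
    (fun k k' hle hk => by
      simp only [Finset.mem_filter, Finset.mem_univ, true_and] at *
      exact lt_of_lt_of_le hk (cnt_antitone m (by exact_mod_cast Nat.succ_le_succ hle)))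
    k
  simpa [pts] using this

/-- parts ≥ K iff i < cnt K, for K ≥ 1 -/
lemma pts_ge_iff (m : Fin N → ℕ) (i K : ℕ) (hK : 1 ≤ K) :
    K ≤ pts m i ↔ i < cnt m K := by
  rcases le_or_gt K N with h | h
  · have hK' : K - 1 < N := by omega
    have := mem_filter_pts m i ⟨K - 1, hK'⟩
    simp only [] at this
    have e : (⟨K - 1, hK'⟩ : Fin N).val + 1 = K := by simp; omega
    rw [e] at this
    omega
  · constructor
    · intro hge
      exact absurd (le_trans hge (pts_le m i)) (by omega)
    · intro hlt
      exfalso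
      have : cnt m K = 0 := by
        apply Finset.sum_eq_zero
        intro k _
        have : ¬ (K ≤ (k:ℕ)+1) := by have := k.2; omega
        simp [this]
      omega

lemma cnt_one (m : Fin N → ℕ) : cnt m 1 = ∑ k, m k := by
  unfold cnt
  apply Finset.sum_congr rfl
  intro k _
  simp

lemma pts_eq_zero (m : Fin N → ℕ) (i : ℕ) (h : ∑ k, m k ≤ i) : pts m i = 0 := by
  by_contra hne
  have : 1 ≤ pts m i := by omega
  rw [pts_ge_iff m i 1 le_rfl, cnt_one] at this
  omega

lemma pts_pos_iff (m : Fin N → ℕ) (i : ℕ) : 0 < pts m i ↔ i < ∑ k, m k := by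
  rw [← cnt_one]
  exact pts_ge_iff m i 1 le_rfl




/-- the partition associated to multiplicities m -/
def P (m : Fin N → ℕ) : IntPartition where
  parts := pts m
  antitone := pts_antitone m
  fin_support := ⟨∑ k, m k, fun n hn => pts_eq_zero m n hn⟩

lemma cnt_add_pair (m : Fin N → ℕ) (k : Fin N) (j : ℕ) :
    cnt (m + 2 • Pi.single k 1) j = cnt m j + (if j ≤ (k:ℕ)+1 then 2 else 0) := by
  unfold cnt
  have h1 : ∀ k' : Fin N, (if j ≤ (k':ℕ)+1 then (m + 2 • Pi.single k 1 : Fin N → ℕ) k' else 0)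
      = (if j ≤ (k':ℕ)+1 then m k' else 0)
        + (if k' = k then (if j ≤ (k:ℕ)+1 then 2 else 0) else 0) := by
    intro k'
    by_cases h : k' = k
    · subst h
      by_cases h2 : j ≤ (k':ℕ)+1 <;> simp [h2, Pi.single_apply]
    · by_cases h2 : j ≤ (k':ℕ)+1 <;> simp [h, h2, Pi.single_apply]
  rw [Finset.sum_congr rfl (fun k' _ => h1 k'), Finset.sum_add_distrib]
  congr 1
  rw [Finset.sum_ite_eq' Finset.univ k (fun _ => if j ≤ (k:ℕ)+1 then 2 else 0)]
  simp

/-- The key piecewise formula for inserting a pair of equal parts k+1. -/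
lemma pts_add_pair (m : Fin N → ℕ) (k : Fin N) (i : ℕ) :
    pts (m + 2 • Pi.single k 1) i =
      if i < cnt m ((k:ℕ)+2) then pts m i
      else if i < cnt m ((k:ℕ)+2) + 2 then (k:ℕ)+1
      else pts m (i-2) := by
  set t := cnt m ((k:ℕ)+2) with ht
  have hcnt : ∀ j, cnt (m + 2 • Pi.single k 1) j = cnt m j + (if j ≤ (k:ℕ)+1 then 2 else 0) :=
    cnt_add_pair m k
  have hle : ∀ k' : Fin N, (k':ℕ) ≤ (k:ℕ) → t ≤ cnt m ((k':ℕ)+1) := by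
    intro k' h
    exact cnt_antitone m (by omega)
  have hgt : ∀ k' : Fin N, (k:ℕ) < (k':ℕ) → cnt m ((k':ℕ)+1) ≤ t := by
    intro k' h
    exact cnt_antitone m (by omega)
  rcases lt_or_ge i t with h1 | h1
  · rw [if_pos h1]
    unfold pts
    apply congrArg
    apply Finset.filter_congr
    intro k' _
    rw [hcnt]
    rcases le_or_gt (k':ℕ) (k:ℕ) with h2 | h2
    · have h5 := hle k' h2
      rw [if_pos (by omega : (k':ℕ)+1 ≤ (k:ℕ)+1)]
      constructor <;> intro <;> omega
    · have h5 := hgt k' h2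
      rw [if_neg (by omega : ¬ ((k':ℕ)+1 ≤ (k:ℕ)+1))]
      constructor <;> intro <;> omega
  · rcases lt_or_ge i (t+2) with h2 | h2
    · rw [if_neg (by omega), if_pos h2]
      unfold pts
      have he : (Finset.univ.filter
          (fun k' : Fin N => i < cnt (m + 2 • Pi.single k 1) ((k' : ℕ) + 1)))
          = Finset.Iic k := by
        ext k'
        simp only [Finset.mem_filter, Finset.mem_univ, true_and, Finset.mem_Iic, hcnt]
        rcases le_or_gt (k':ℕ) (k:ℕ) with h3 | h3
        · have h5 := hle k' h3
          rw [if_pos (by omega : (k':ℕ)+1 ≤ (k:ℕ)+1)]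
          constructor
          · intro _; exact h3
          · intro _; omega
        · have h5 := hgt k' h3
          rw [if_neg (by omega : ¬ ((k':ℕ)+1 ≤ (k:ℕ)+1))]
          constructor
          · intro h6; omega
          · intro h6
            exact absurd h3 (by simpa using h6)
      rw [he, Fin.card_Iic]
    · rw [if_neg (by omega), if_neg (by omega)]
      unfold pts
      apply congrArg
      apply Finset.filter_congr
      intro k' _
      rw [hcnt]
      rcases le_or_gt (k':ℕ) (k:ℕ) with h3 | h3
      · have h5 := hle k' h3
        rw [if_pos (by omega : (k':ℕ)+1 ≤ (k:ℕ)+1)]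
        constructor <;> intro <;> omega
      · have h5 := hgt k' h3
        rw [if_neg (by omega : ¬ ((k':ℕ)+1 ≤ (k:ℕ)+1))]
        constructor <;> intro <;> omega




lemma insert_sum (f : ℕ → ℕ) (i0 M : ℕ) (h : i0 ≤ M) (v : ℕ) :
    ∑ i ∈ Finset.range (M+1), (if i < i0 then f i else if i = i0 then v else f (i-1))
      = v + ∑ i ∈ Finset.range M, f i := by
  induction M, h using Nat.le_induction with
  | base =>
    rw [Finset.sum_range_succ, if_neg (lt_irrefl i0), if_pos rfl, add_comm]
    congr 1
    apply Finset.sum_congr rfl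
    intro i hi
    exact if_pos (Finset.mem_range.mp hi)
  | succ M hM ih =>
    rw [Finset.sum_range_succ, ih, Finset.sum_range_succ]
    have : ¬ (M + 1 < i0) := by omega
    rw [if_neg this, if_neg (by omega)]
    simp only [Nat.add_sub_cancel]
    omega

lemma length_P (m : Fin N → ℕ) : (P m).length = ∑ k, m k := by
  unfold IntPartition.length
  have : Function.support (P m).parts = ↑(Finset.range (∑ k, m k)) := by
    ext i
    simp only [Function.mem_support, Finset.coe_range, Set.mem_Iio]
    show ¬ (pts m i = 0) ↔ _
    have := pts_pos_iff m i
    omega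
  rw [this, Set.ncard_coe_finset, Finset.card_range]

/-- generic statistic lemma: the finsum equals a range sum -/
lemma stat_eq_sum (m : Fin N → ℕ) (g : ℕ → ℕ) (hg : g 0 = 0) (e : ℕ → ℕ)
    (M : ℕ) (hM : ∀ i, M ≤ i → ∑ k, m k ≤ e i) :
    ∑ᶠ i, g ((P m).parts (e i)) = ∑ i ∈ Finset.range M, g (pts m (e i)) := by
  apply finsum_eq_sum_of_support_subset
  intro i hi
  simp only [Function.mem_support] at hi
  simp only [Finset.coe_range, Set.mem_Iio]
  by_contra hiM
  apply hi
  show g (pts m (e i)) = 0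
  rw [pts_eq_zero m _ (hM i (by omega))]
  exact hg

/-- the insertion identity for a statistic along even or odd positions -/
lemma stat_add_pair (m : Fin N → ℕ) (k : Fin N) (g : ℕ → ℕ) (hg : g 0 = 0)
    (r : ℕ) (hr : r ≤ 1) :
    ∑ᶠ i, g ((P (m + 2 • Pi.single k 1)).parts (2*i+r)) =
      g ((k:ℕ)+1) + ∑ᶠ i, g ((P m).parts (2*i+r)) := by
  set t := cnt m ((k:ℕ)+2) with ht
  set M := ∑ k', m k' with hMdef
  have htM : t ≤ M := by
    have h1 : cnt m ((k:ℕ)+2) ≤ cnt m 1 := cnt_antitone m (by omega)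
    have h2 : cnt m 1 = ∑ k', m k' := by
      unfold cnt; apply Finset.sum_congr rfl; intro k' _; simp
    omega
  set i0 := (t + 1 - r) / 2 with hi0
  have hsum' : ∑ k', (m + 2 • Pi.single k 1 : Fin N → ℕ) k' = M + 2 := by
    have h1 : ∀ k' : Fin N, (m + 2 • Pi.single k 1 : Fin N → ℕ) k'
        = m k' + (if k' = k then 2 else 0) := by
      intro k'
      by_cases h : k' = k <;> simp [h, Pi.single_apply]
    rw [Finset.sum_congr rfl (fun k' _ => h1 k'), Finset.sum_add_distrib,
      Finset.sum_ite_eq' Finset.univ k (fun _ => 2)]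
    simp [hMdef]
  have hL : ∑ᶠ i, g ((P (m + 2 • Pi.single k 1)).parts (2*i+r)) =
      ∑ i ∈ Finset.range (M+1), g (pts (m + 2 • Pi.single k 1) (2*i+r)) := by
    apply stat_eq_sum _ g hg _ (M+1)
    intro i hi
    rw [hsum']
    omega
  have hR : ∑ᶠ i, g ((P m).parts (2*i+r)) =
      ∑ i ∈ Finset.range M, g (pts m (2*i+r)) := by
    apply stat_eq_sum _ g hg _ M
    intro i hi
    omega
  rw [hL, hR]
  have key : ∀ i, g (pts (m + 2 • Pi.single k 1) (2*i+r)) =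
      (if i < i0 then (fun j => g (pts m (2*j+r))) i
       else if i = i0 then g ((k:ℕ)+1)
       else (fun j => g (pts m (2*j+r))) (i-1)) := by
    intro i
    rw [pts_add_pair]
    rcases lt_trichotomy i i0 with h1 | h1 | h1
    · rw [if_pos (by omega : 2*i+r < t), if_pos h1]
    · subst h1
      rw [if_neg (by omega : ¬ (2*i0+r < t)), if_pos (by omega : 2*i0+r < t + 2),
        if_neg (lt_irrefl i0), if_pos rfl]
    · rw [if_neg (by omega : ¬ (2*i+r < t)), if_neg (by omega : ¬ (2*i+r < t + 2)),
        if_neg (by omega), if_neg (by omega)]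
      have he2 : 2*i+r-2 = 2*(i-1)+r := by omega
      rw [he2]
  rw [Finset.sum_congr rfl (fun i _ => key i)]
  exact insert_sum _ i0 M (by omega) _




lemma sum_add_pair (m : Fin N → ℕ) (k : Fin N) :
    ∑ k', (m + 2 • Pi.single k 1 : Fin N → ℕ) k' = (∑ k', m k') + 2 := by
  have h1 : ∀ k' : Fin N, (m + 2 • Pi.single k 1 : Fin N → ℕ) k'
      = m k' + (if k' = k then 2 else 0) := by
    intro k'
    by_cases h : k' = k <;> simp [h, Pi.single_apply]
  rw [Finset.sum_congr rfl (fun k' _ => h1 k'), Finset.sum_add_distrib,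
    Finset.sum_ite_eq' Finset.univ k (fun _ => 2)]
  simp

lemma statA_add_pair (m : Fin N → ℕ) (k : Fin N) :
    (P (m + 2 • Pi.single k 1)).statA = (((k:ℕ)+2)/2) + (P m).statA := by
  unfold IntPartition.statA
  have := stat_add_pair m k (fun n => (n+1)/2) (by norm_num) 0 (by norm_num)
  simp only [Nat.add_zero] at this
  rw [this]

lemma statB_add_pair (m : Fin N → ℕ) (k : Fin N) :
    (P (m + 2 • Pi.single k 1)).statB = (((k:ℕ)+1)/2) + (P m).statB := by
  unfold IntPartition.statB
  have := stat_add_pair m k (fun n => n/2) (by norm_num) 0 (by norm_num)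
  simp only [Nat.add_zero] at this
  rw [this]

lemma statC_add_pair (m : Fin N → ℕ) (k : Fin N) :
    (P (m + 2 • Pi.single k 1)).statC = (((k:ℕ)+2)/2) + (P m).statC := by
  unfold IntPartition.statC
  have := stat_add_pair m k (fun n => (n+1)/2) (by norm_num) 1 (by norm_num)
  rw [this]

lemma statD_add_pair (m : Fin N → ℕ) (k : Fin N) :
    (P (m + 2 • Pi.single k 1)).statD = (((k:ℕ)+1)/2) + (P m).statD := by
  unfold IntPartition.statD
  have := stat_add_pair m k (fun n => n/2) (by norm_num) 1 (by norm_num)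
  rw [this]

/-- the factor contributed by a pair of parts of size k+1 -/
noncomputable def xfac (a b c d z : ℝ) (k : Fin N) : ℝ :=
  z^2 * ((a*c)^(((k:ℕ)+2)/2) * (b*d)^(((k:ℕ)+1)/2))

/-- the full weight of the partition P m -/
noncomputable def F (a b c d z : ℝ) (m : Fin N → ℕ) : ℝ :=
  IntPartition.weight a b c d (P m) * z ^ (P m).length

lemma F_add_pair (a b c d z : ℝ) (m : Fin N → ℕ) (k : Fin N) :
    F a b c d z (m + 2 • Pi.single k 1) = xfac a b c d z k * F a b c d z m := by
  unfold F IntPartition.weight xfac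
  rw [statA_add_pair, statB_add_pair, statC_add_pair, statD_add_pair,
    length_P, length_P, sum_add_pair]
  simp only [pow_add, mul_pow]
  ring

lemma F_add_two_smul (a b c d z : ℝ) (m p : Fin N → ℕ) :
    F a b c d z (m + 2 • p) = F a b c d z m * ∏ k, xfac a b c d z k ^ p k := by
  suffices H : ∀ n (p : Fin N → ℕ), ∑ k, p k ≤ n → ∀ m,
      F a b c d z (m + 2 • p) = F a b c d z m * ∏ k, xfac a b c d z k ^ p k by
    exact H _ p le_rfl m
  intro n
  induction n with
  | zero =>
    intro p hp m
    have hp0 : p = 0 := by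
      funext k
      have := Finset.sum_eq_zero_iff.mp (Nat.le_zero.mp hp) k (Finset.mem_univ k)
      exact this
    subst hp0
    simp
  | succ n ih =>
    intro p hp m
    rcases Nat.eq_zero_or_pos (∑ k, p k) with h0 | hpos
    · have hp0 : p = 0 := by
        funext k
        exact Finset.sum_eq_zero_iff.mp h0 k (Finset.mem_univ k)
      subst hp0
      simp
    · have hex : ∃ k0, p k0 ≠ 0 := by
        by_contra hall
        push_neg at hall
        rw [Finset.sum_eq_zero (fun k _ => hall k)] at hpos
        omega
      obtain ⟨k0, hk0⟩ := hex
      set p' : Fin N → ℕ := fun k => p k - (Pi.single k0 1 : Fin N → ℕ) k with hp'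
      have hpp : p = p' + Pi.single k0 1 := by
        funext k
        by_cases h : k = k0 <;> simp [hp', h, Pi.single_apply] <;> omega
      have hsplit : m + 2 • p = (m + 2 • p') + 2 • Pi.single k0 1 := by
        rw [hpp]; funext k; simp [Pi.single_apply]; ring
      have hsingle : ∑ k, (Pi.single k0 1 : Fin N → ℕ) k = 1 := by
        rw [Finset.sum_congr rfl (fun k _ => show (Pi.single k0 1 : Fin N → ℕ) k
          = if k = k0 then 1 else 0 from by by_cases h : k = k0 <;> simp [h, Pi.single_apply]),
          Finset.sum_ite_eq' Finset.univ k0 (fun _ => 1)]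
        simp
      have hsum' : ∑ k, p' k ≤ n := by
        have h1 : ∑ k, p k = (∑ k, p' k) + ∑ k, (Pi.single k0 1 : Fin N → ℕ) k := by
          rw [hpp]
          simp only [Pi.add_apply]
          rw [Finset.sum_add_distrib]
        omega
      rw [hsplit, F_add_pair, ih p' hsum' m]
      have hprod : ∏ k, xfac a b c d z k ^ p k
          = (∏ k, xfac a b c d z k ^ p' k) * xfac a b c d z k0 := by
        rw [hpp]
        simp only [Pi.add_apply]
        have hh : ∀ k, xfac a b c d z k ^ (p' k + (Pi.single k0 1 : Fin N → ℕ) k)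
            = xfac a b c d z k ^ p' k * (if k = k0 then xfac a b c d z k0 else 1) := by
          intro k
          by_cases h : k = k0 <;> simp [h, Pi.single_apply, pow_add]
        rw [Finset.prod_congr rfl (fun k _ => hh k), Finset.prod_mul_distrib,
          Finset.prod_ite_eq' Finset.univ k0 (fun _ => xfac a b c d z k0)]
        simp
      rw [hprod]
      ring




lemma IntPartition.ext' {l l' : IntPartition} (h : l.parts = l'.parts) : l = l' := by
  cases l; cases l'; cases h; rfl

/-- characterization of "≥ K" for antitone sequences via counting -/
lemma antitone_card_iff (f : ℕ → ℕ) (hf : Antitone f) (B : ℕ) (hB : ∀ n, B ≤ n → f n = 0)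
    (K i : ℕ) (hK : 1 ≤ K) :
    K ≤ f i ↔ i < ((Finset.range B).filter (fun i' => K ≤ f i')).card := by
  constructor
  · intro h
    have hiB : i < B := by
      by_contra hc
      rw [hB i (by omega)] at h
      omega
    have hsub : Finset.range (i+1) ⊆ (Finset.range B).filter (fun i' => K ≤ f i') := by
      intro i' hi'
      rw [Finset.mem_range] at hi'
      rw [Finset.mem_filter, Finset.mem_range]
      exact ⟨by omega, le_trans h (hf (by omega))⟩
    have := Finset.card_le_card hsub
    rw [Finset.card_range] at this
    omega
  · intro h
    by_contra hc
    have hsub : (Finset.range B).filter (fun i' => K ≤ f i') ⊆ Finset.range i := by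
      intro i' hi'
      rw [Finset.mem_filter] at hi'
      rw [Finset.mem_range]
      by_contra hc2
      have := hf (show i ≤ i' by omega)
      omega
    have := Finset.card_le_card hsub
    rw [Finset.card_range] at this
    omega

lemma cnt_le_sum (m : Fin N → ℕ) (K : ℕ) (hK : 1 ≤ K) : cnt m K ≤ ∑ k, m k := by
  rw [← cnt_one]
  exact cnt_antitone m hK

lemma cnt_eq_card (m : Fin N → ℕ) (K : ℕ) (hK : 1 ≤ K) (B : ℕ) (hB : ∑ k, m k ≤ B) :
    cnt m K = ((Finset.range B).filter (fun i => K ≤ pts m i)).card := by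
  have : (Finset.range B).filter (fun i => K ≤ pts m i) = Finset.range (cnt m K) := by
    ext i
    rw [Finset.mem_filter, Finset.mem_range, Finset.mem_range, pts_ge_iff m i K hK]
    constructor
    · exact fun h => h.2
    · intro h
      exact ⟨by have := cnt_le_sum m K hK; omega, h⟩
  rw [this, Finset.card_range]

lemma cnt_succ (m : Fin N → ℕ) (k : Fin N) :
    cnt m ((k:ℕ)+1) = cnt m ((k:ℕ)+2) + m k := by
  unfold cnt
  have h1 : ∀ k' : Fin N, (if (k:ℕ)+1 ≤ (k':ℕ)+1 then m k' else 0)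
      = (if (k:ℕ)+2 ≤ (k':ℕ)+1 then m k' else 0) + (if k' = k then m k else 0) := by
    intro k'
    by_cases h : k' = k
    · subst h
      rw [if_pos (by omega), if_neg (by omega), if_pos rfl, Nat.zero_add]
    · have hne : (k':ℕ) ≠ (k:ℕ) := fun hc => h (Fin.ext hc)
      rw [if_neg h]
      rcases lt_or_ge (k':ℕ) (k:ℕ) with h2 | h2
      · rw [if_neg (by omega), if_neg (by omega), Nat.add_zero]
      · rw [if_pos (by omega), if_pos (by omega), Nat.add_zero]
  rw [Finset.sum_congr rfl (fun k' _ => h1 k'), Finset.sum_add_distrib,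
    Finset.sum_ite_eq' Finset.univ k (fun _ => m k)]
  simp

lemma P_injective : Function.Injective (P : (Fin N → ℕ) → IntPartition) := by
  intro m m' h
  have hpts : pts m = pts m' := congrArg IntPartition.parts h
  have hcnt : ∀ K, 1 ≤ K → cnt m K = cnt m' K := by
    intro K hK
    set B := max (∑ k, m k) (∑ k, m' k) with hB
    rw [cnt_eq_card m K hK B (le_max_left _ _), cnt_eq_card m' K hK B (le_max_right _ _), hpts]
  funext k
  have h1 := cnt_succ m k
  have h2 := cnt_succ m' k
  have h3 := hcnt ((k:ℕ)+1) (by omega)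
  have h4 := hcnt ((k:ℕ)+2) (by omega)
  omega

/-- multiplicity vector of an arbitrary partition -/
noncomputable def mult (l : IntPartition) : Fin N → ℕ := fun k =>
  ((Finset.range (l.fin_support.choose)).filter (fun i => l.parts i = (k:ℕ)+1)).card

lemma P_mult (l : IntPartition) (hl : l.parts 0 ≤ N) : P (mult (N := N) l) = l := by
  set B := l.fin_support.choose with hBdef
  have hB : ∀ n, B ≤ n → l.parts n = 0 := l.fin_support.choose_spec
  have hple : ∀ i, l.parts i ≤ N := fun i => le_trans (l.antitone (Nat.zero_le i)) hl
  -- cnt of mult = counting function of l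
  have hcnt : ∀ K, 1 ≤ K →
      cnt (mult (N := N) l) K = ((Finset.range B).filter (fun i => K ≤ l.parts i)).card := by
    intro K hK
    have step1 : ((Finset.range B).filter (fun i => K ≤ l.parts i)).card
        = ∑ v ∈ Finset.Icc K N, ((Finset.range B).filter (fun i => l.parts i = v)).card := by
      rw [Finset.card_eq_sum_card_fiberwise
        (f := fun i => l.parts i) (t := Finset.Icc K N)
        (fun i hi => by
          rw [Finset.mem_coe, Finset.mem_filter] at hi
          rw [Finset.mem_coe, Finset.mem_Icc]
          exact ⟨hi.2, hple i⟩)]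
      apply Finset.sum_congr rfl
      intro v hv
      rw [Finset.mem_Icc] at hv
      congr 1
      rw [Finset.filter_filter]
      apply Finset.filter_congr
      intro i _
      constructor
      · exact fun h => h.2
      · exact fun h => ⟨by omega, h⟩
    have step2 : cnt (mult (N := N) l) K
        = ∑ j ∈ Finset.range N,
            if K ≤ j + 1 then ((Finset.range B).filter (fun i => l.parts i = j+1)).card else 0 := by
      unfold cnt mult
      rw [← Fin.sum_univ_eq_sum_range]
    have step3 : (Finset.range N).filter (fun j => K ≤ j + 1) = Finset.Ico (K-1) N := by
      ext j
      rw [Finset.mem_filter, Finset.mem_range, Finset.mem_Ico]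
      omega
    rw [step2, ← Finset.sum_filter, step3, step1]
    apply Finset.sum_nbij' (fun j => j + 1) (fun v => v - 1)
    · intro a ha
      rw [Finset.mem_Ico] at ha
      rw [Finset.mem_Icc]
      omega
    · intro v hv
      rw [Finset.mem_Icc] at hv
      rw [Finset.mem_Ico]
      omega
    · intro a _
      omega
    · intro v hv
      rw [Finset.mem_Icc] at hv
      omega
    · intro a _
      rfl
  -- parts agree
  apply IntPartition.ext'
  funext i
  show pts (mult (N := N) l) i = l.parts i
  have key : ∀ K, 1 ≤ K → (K ≤ pts (mult (N := N) l) i ↔ K ≤ l.parts i) := by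
    intro K hK
    rw [pts_ge_iff _ _ _ hK, hcnt K hK,
      ← antitone_card_iff l.parts l.antitone B hB K i hK]
  have h1 := key (pts (mult (N := N) l) i)
  have h2 := key (l.parts i)
  omega

lemma strict_iff (m : Fin N → ℕ) : (P m).Strict ↔ ∀ k, m k ≤ 1 := by
  constructor
  · intro hs k
    by_contra hc
    push_neg at hc
    have hcs := cnt_succ m k
    set i := cnt m ((k:ℕ)+2) with hi
    have hik : ∀ j, j ≤ i + 1 → (k:ℕ)+1 ≤ pts m j := by
      intro j hj
      rw [pts_ge_iff _ _ _ (by omega)]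
      omega
    have hik2 : ∀ j, i ≤ j → pts m j ≤ (k:ℕ)+1 := by
      intro j hj
      by_contra hc2
      have : (k:ℕ)+2 ≤ pts m j := by omega
      rw [pts_ge_iff _ _ _ (by omega)] at this
      omega
    have hpi : pts m i = (k:ℕ)+1 := le_antisymm (hik2 i le_rfl) (hik i (by omega))
    have hpi1 : pts m (i+1) = (k:ℕ)+1 := le_antisymm (hik2 (i+1) (by omega)) (hik (i+1) le_rfl)
    have := hs i (by show pts m (i+1) ≠ 0; omega)
    show False
    have : pts m (i+1) < pts m i := this
    omega
  · intro hm i hne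
    have hne' : pts m (i+1) ≠ 0 := hne
    set v := pts m (i+1) with hv
    have hv1 : 1 ≤ v := by omega
    have hvN : v ≤ N := pts_le m (i+1)
    set k : Fin N := ⟨v-1, by omega⟩ with hk
    have hkv : (k:ℕ)+1 = v := by simp [hk]; omega
    have h1 : i + 1 < cnt m v := by
      rw [← pts_ge_iff _ _ _ hv1]
    have h2 := cnt_succ m k
    rw [hkv] at h2
    have h3 := hm k
    have h4 : i < cnt m ((k:ℕ)+2) := by omega
    show pts m (i+1) < pts m i
    have h5 : v + 1 ≤ pts m i := by
      rw [pts_ge_iff _ _ _ (by omega), show v + 1 = (k:ℕ)+2 from by omega]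
      exact h4
    omega




/-- summability and tsum of products over function spaces -/
lemma pi_tsum : ∀ {n : ℕ} (g : Fin n → ℕ → ℝ), (∀ k, Summable fun j => |g k j|) →
    (Summable (fun p : Fin n → ℕ => |∏ k, g k (p k)|) ∧
     (∑' p : Fin n → ℕ, ∏ k, g k (p k)) = ∏ k, ∑' j, g k j) := by
  intro n
  induction n with
  | zero =>
    intro g hg
    constructor
    · apply Summable.of_finite
    · rw [tsum_eq_single (fun k => 0) (fun b' hb' => absurd (Subsingleton.elim _ _) hb')]
      simp
  | succ n ih =>
    intro g hg
    set e := (Fin.consEquiv (fun _ : Fin (n+1) => ℕ)).symm with he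
    obtain ⟨ihS, ihT⟩ := ih (fun k j => g k.succ j) (fun k => hg k.succ)
    -- summability over the product type
    have hprodS : Summable (fun q : ℕ × (Fin n → ℕ) =>
        |g 0 q.1 * ∏ k : Fin n, g k.succ (q.2 k)|) := by
      have h1 : Summable (fun q : ℕ × (Fin n → ℕ) =>
          |g 0 q.1| * |∏ k : Fin n, g k.succ (q.2 k)|) := by
        apply summable_mul_of_summable_norm (f := fun j : ℕ => |g 0 j|)
          (g := fun p : Fin n → ℕ => |∏ k : Fin n, g k.succ (p k)|)
        · simp only [Real.norm_eq_abs, abs_abs]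
          exact hg 0
        · simp only [Real.norm_eq_abs, abs_abs]
          exact ihS
      simpa only [abs_mul] using h1
    have hcomp : ∀ q : ℕ × (Fin n → ℕ),
        ∏ k : Fin (n+1), g k ((e.symm q) k)
          = g 0 q.1 * ∏ k : Fin n, g k.succ (q.2 k) := by
      intro q
      rw [Fin.prod_univ_succ (fun k : Fin (n+1) => g k ((e.symm q) k))]
      simp [he]
    constructor
    · rw [← (e.symm).summable_iff (f := fun p : Fin (n+1) → ℕ => |∏ k, g k (p k)|)]
      have h2 : (fun p : Fin (n+1) → ℕ => |∏ k, g k (p k)|) ∘ e.symm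
          = fun q : ℕ × (Fin n → ℕ) => |g 0 q.1 * ∏ k : Fin n, g k.succ (q.2 k)| := by
        funext q
        simp only [Function.comp_apply]
        rw [hcomp q]
      rw [h2]
      exact hprodS
    · rw [← (e.symm).tsum_eq (f := fun p : Fin (n+1) → ℕ => ∏ k, g k (p k))]
      rw [tsum_congr hcomp]
      rw [← tsum_mul_tsum_of_summable_norm (f := fun j : ℕ => g 0 j)
        (g := fun p : Fin n → ℕ => ∏ k : Fin n, g k.succ (p k))
        (by simp only [Real.norm_eq_abs]; exact hg 0)
        (by simp only [Real.norm_eq_abs]; exact ihS)]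
      rw [ihT, Fin.prod_univ_succ (fun k : Fin (n+1) => ∑' j, g k j)]




/-- the equivalence between multiplicity vectors and partitions with parts ≤ N -/
noncomputable def EP (N : ℕ) : (Fin N → ℕ) ≃ {l : IntPartition // l.parts 0 ≤ N} :=
  Equiv.ofBijective (fun m => ⟨P m, pts_le m 0⟩)
    ⟨fun m m' h => P_injective (congrArg Subtype.val h),
     fun l => ⟨mult (N := N) l.1, Subtype.ext (P_mult l.1 l.2)⟩⟩

/-- the equivalence between 0-1 vectors and strict partitions with parts ≤ N -/
noncomputable def SE (N : ℕ) :
    (Fin N → Fin 2) ≃ {μ : IntPartition // μ.Strict ∧ μ.parts 0 ≤ N} :=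
  Equiv.ofBijective
    (fun ε => ⟨P (fun k => (ε k : ℕ)),
      (strict_iff _).mpr (fun k => by have := (ε k).2; omega), pts_le _ 0⟩)
    ⟨fun ε ε' h => by
      have h2 : (fun k => ((ε k : ℕ))) = (fun k => ((ε' k : ℕ))) :=
        P_injective (congrArg Subtype.val h)
      funext k
      exact Fin.ext (congrFun h2 k),
     fun μ => by
      refine ⟨fun k => ⟨mult (N := N) μ.1 k, ?_⟩, ?_⟩
      · have hs : (P (mult (N := N) μ.1)).Strict := by
          rw [P_mult μ.1 μ.2.2]
          exact μ.2.1
        have := (strict_iff _).mp hs k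
        omega
      · apply Subtype.ext
        show P _ = μ.1
        have : (fun k => ((⟨mult (N := N) μ.1 k, by
            have hs : (P (mult (N := N) μ.1)).Strict := by
              rw [P_mult μ.1 μ.2.2]; exact μ.2.1
            have := (strict_iff _).mp hs k; omega⟩ : Fin 2) : ℕ)) = mult (N := N) μ.1 := rfl
        rw [this, P_mult μ.1 μ.2.2]⟩

/-- parity-decomposition of a multiplicity vector -/
def Em (N : ℕ) : (Fin N → Fin 2) × (Fin N → ℕ) ≃ (Fin N → ℕ) where
  toFun q := fun k => ((q.1 k : ℕ)) + 2 * q.2 k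
  invFun m := (fun k => ⟨m k % 2, Nat.mod_lt _ (by norm_num)⟩, fun k => m k / 2)
  left_inv q := by
    ext k
    · show ((q.1 k : ℕ) + 2 * q.2 k) % 2 = (q.1 k : ℕ)
      have := (q.1 k).2
      omega
    · show ((q.1 k : ℕ) + 2 * q.2 k) / 2 = q.2 k
      have := (q.1 k).2
      omega
  right_inv m := by
    funext k
    show (m k % 2) + 2 * (m k / 2) = m k
    omega

lemma F_Em (a b c d z : ℝ) (q : (Fin N → Fin 2) × (Fin N → ℕ)) :
    F a b c d z (Em N q) = F a b c d z (fun k => ((q.1 k : ℕ)))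
      * ∏ k, xfac a b c d z k ^ q.2 k := by
  have : Em N q = (fun k => ((q.1 k : ℕ))) + 2 • q.2 := by
    funext k
    show ((q.1 k : ℕ)) + 2 * q.2 k = _
    simp [Pi.smul_apply]
  rw [this, F_add_two_smul]

/-- bound on the pair factor -/
lemma xfac_abs_lt_one (a b c d z : ℝ) (ha : |a| < 1) (hb : |b| < 1) (hc : |c| < 1)
    (hd : |d| < 1) (hz : z ^ 2 * |a * c| < 1) (k : Fin N) :
    |xfac a b c d z k| < 1 := by
  have hac : |a * c| < 1 := by
    rw [abs_mul]
    calc |a| * |c| ≤ |a| * 1 := by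
          apply mul_le_mul_of_nonneg_left hc.le (abs_nonneg a)
      _ < 1 := by rw [mul_one]; exact ha
  have hbd : |b * d| < 1 := by
    rw [abs_mul]
    calc |b| * |d| ≤ |b| * 1 := by
          apply mul_le_mul_of_nonneg_left hd.le (abs_nonneg b)
      _ < 1 := by rw [mul_one]; exact hb
  have habs : |xfac a b c d z k|
      = z^2 * (|a*c| ^ (((k:ℕ)+2)/2) * |b*d| ^ (((k:ℕ)+1)/2)) := by
    unfold xfac
    rw [abs_mul, abs_mul, abs_pow, abs_pow, abs_pow, sq_abs]
  rw [habs]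
  have h1 : |a*c| ^ (((k:ℕ)+2)/2) ≤ |a*c| ^ 1 :=
    pow_le_pow_of_le_one (abs_nonneg _) hac.le (by omega)
  have h2 : |b*d| ^ (((k:ℕ)+1)/2) ≤ 1 := pow_le_one₀ (abs_nonneg _) hbd.le
  have h3 : z^2 * (|a*c| ^ (((k:ℕ)+2)/2) * |b*d| ^ (((k:ℕ)+1)/2)) ≤ z^2 * |a*c| := by
    rw [pow_one] at h1
    have hnn1 : (0:ℝ) ≤ |a*c| ^ (((k:ℕ)+2)/2) := pow_nonneg (abs_nonneg _) _
    have hnn2 : (0:ℝ) ≤ |b*d| ^ (((k:ℕ)+1)/2) := pow_nonneg (abs_nonneg _) _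
    have : |a*c| ^ (((k:ℕ)+2)/2) * |b*d| ^ (((k:ℕ)+1)/2) ≤ |a*c| := by
      calc |a*c| ^ (((k:ℕ)+2)/2) * |b*d| ^ (((k:ℕ)+1)/2)
          ≤ |a*c| ^ (((k:ℕ)+2)/2) * 1 := mul_le_mul_of_nonneg_left h2 hnn1
        _ = |a*c| ^ (((k:ℕ)+2)/2) := mul_one _
        _ ≤ |a*c| := h1
    exact mul_le_mul_of_nonneg_left this (sq_nonneg z)
  exact lt_of_le_of_lt h3 hz

/-- the product formula for the Pochhammer denominators -/
lemma poch_prod (a b c d z : ℝ) :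
    ∀ N : ℕ, poch (z^2*(a*b*c*d)) (a*b*c*d) (N/2) * poch (z^2*a*c) (a*b*c*d) ((N+1)/2)
      = ∏ k : Fin N, (1 - xfac a b c d z k) := by
  intro N
  induction N with
  | zero => simp [poch]
  | succ n ih =>
    rw [Fin.prod_univ_castSucc (fun k : Fin (n+1) => 1 - xfac a b c d z k)]
    have hcast : ∀ k : Fin n, xfac a b c d z (Fin.castSucc k) = xfac a b c d z k :=
      fun k => rfl
    rw [Finset.prod_congr rfl (fun k _ => by rw [hcast k]), ← ih]
    rcases Nat.even_or_odd n with ⟨t, ht⟩ | ⟨t, ht⟩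
    · -- n = t + t, so n+1 is odd: second poch grows
      subst ht
      have e1 : (t+t+1)/2 = t := by omega
      have e2 : (t+t)/2 = t := by omega
      have e3 : (t+t+1+1)/2 = t+1 := by omega
      rw [e1, e2, e3]
      unfold poch
      rw [Finset.prod_range_succ]
      have hx : xfac a b c d z (Fin.last (t+t)) = (z^2*a*c) * (a*b*c*d)^t := by
        unfold xfac
        rw [show ((Fin.last (t+t)) : ℕ) = t+t from rfl]
        have f1 : (t+t+2)/2 = t+1 := by omega
        have f2 : (t+t+1)/2 = t := by omega
        rw [f1, f2]
        have h4 : (a*b*c*d) = (a*c)*(b*d) := by ring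
        rw [h4, mul_pow, pow_succ]
        ring
      rw [hx]
      ring
    · -- n = 2t+1, so n+1 is even: first poch grows
      subst ht
      have e1 : (2*t+1+1)/2 = t+1 := by omega
      have e2 : (2*t+1)/2 = t := by omega
      have e3 : (2*t+1+1+1)/2 = t+1 := by omega
      rw [e1, e2, e3]
      unfold poch
      rw [Finset.prod_range_succ]
      have hx : xfac a b c d z (Fin.last (2*t+1)) = (z^2*(a*b*c*d)) * (a*b*c*d)^t := by
        unfold xfac
        rw [show ((Fin.last (2*t+1)) : ℕ) = 2*t+1 from rfl]
        have f1 : (2*t+1+2)/2 = t+1 := by omega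
        have f2 : (2*t+1+1)/2 = t+1 := by omega
        rw [f1, f2]
        have h4 : (a*b*c*d) = (a*c)*(b*d) := by ring
        rw [h4, mul_pow, pow_succ, pow_succ]
        ring
      rw [hx]
      ring



end AS

open AS

theorem phi_eq_psi_div (a b c d z q : ℝ)
    (ha : |a| < 1) (hb : |b| < 1) (hc : |c| < 1) (hd : |d| < 1)
    (hz : z ^ 2 * |a * c| < 1) (hq : q = a * b * c * d) (N : ℕ) :
    Summable (fun l : {l : IntPartition // l.parts 0 ≤ N} =>
      |IntPartition.weight a b c d l.1 * z ^ l.1.length|) ∧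
    ∑' l : {l : IntPartition // l.parts 0 ≤ N},
        IntPartition.weight a b c d l.1 * z ^ l.1.length =
      Psi a b c d z N /
        (poch (z ^ 2 * q) q (N / 2) * poch (z ^ 2 * a * c) q ((N + 1) / 2)) := by
  classical
  subst hq
  have hx : ∀ k : Fin N, |xfac a b c d z k| < 1 :=
    fun k => xfac_abs_lt_one a b c d z ha hb hc hd hz k
  have hgeo : ∀ k : Fin N, Summable (fun j : ℕ => |xfac a b c d z k ^ j|) := by
    intro k
    have h := summable_geometric_of_lt_one (abs_nonneg (xfac a b c d z k)) (hx k)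
    have he : ∀ j : ℕ, |xfac a b c d z k ^ j| = |xfac a b c d z k| ^ j :=
      fun j => abs_pow _ _
    rw [show (fun j : ℕ => |xfac a b c d z k ^ j|)
      = fun j : ℕ => |xfac a b c d z k| ^ j from funext he]
    exact h
  obtain ⟨hGS, hGT⟩ := pi_tsum (fun (k : Fin N) (j : ℕ) => xfac a b c d z k ^ j) hgeo
  -- summability over the parity decomposition
  have hsumEm : Summable (fun mq : (Fin N → Fin 2) × (Fin N → ℕ) =>
      |F a b c d z (Em N mq)|) := by
    have h1 : Summable (fun mq : (Fin N → Fin 2) × (Fin N → ℕ) =>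
        |F a b c d z (fun k => ((mq.1 k : ℕ)))| * |∏ k, xfac a b c d z k ^ mq.2 k|) := by
      apply summable_mul_of_summable_norm
        (f := fun ε : Fin N → Fin 2 => |F a b c d z (fun k => ((ε k : ℕ)))|)
        (g := fun p : Fin N → ℕ => |∏ k, xfac a b c d z k ^ p k|)
      · exact Summable.of_finite
      · simp only [Real.norm_eq_abs, abs_abs]
        exact hGS
    have h2 : ∀ mq : (Fin N → Fin 2) × (Fin N → ℕ),
        |F a b c d z (Em N mq)|
          = |F a b c d z (fun k => ((mq.1 k : ℕ)))| * |∏ k, xfac a b c d z k ^ mq.2 k| := by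
      intro mq
      rw [F_Em, abs_mul]
    rw [show (fun mq : (Fin N → Fin 2) × (Fin N → ℕ) => |F a b c d z (Em N mq)|)
      = _ from funext h2]
    exact h1
  have hsummableM : Summable (fun m : Fin N → ℕ => |F a b c d z m|) :=
    (Em N).summable_iff.mp hsumEm
  have hsummableSub : Summable (fun l : {l : IntPartition // l.parts 0 ≤ N} =>
      |IntPartition.weight a b c d l.1 * z ^ l.1.length|) :=
    (EP N).summable_iff.mp hsummableM
  refine ⟨hsummableSub, ?_⟩
  -- the tsum computation
  have hT1 : ∑' l : {l : IntPartition // l.parts 0 ≤ N},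
      IntPartition.weight a b c d l.1 * z ^ l.1.length = ∑' m : Fin N → ℕ, F a b c d z m :=
    ((EP N).tsum_eq (fun l : {l : IntPartition // l.parts 0 ≤ N} =>
      IntPartition.weight a b c d l.1 * z ^ l.1.length)).symm
  have hT2 : ∑' m : Fin N → ℕ, F a b c d z m
      = ∑' mq : (Fin N → Fin 2) × (Fin N → ℕ), F a b c d z (Em N mq) :=
    ((Em N).tsum_eq (F a b c d z)).symm
  have hT3 : ∑' mq : (Fin N → Fin 2) × (Fin N → ℕ), F a b c d z (Em N mq)
      = (∑' ε : Fin N → Fin 2, F a b c d z (fun k => ((ε k : ℕ))))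
        * (∑' p : Fin N → ℕ, ∏ k, xfac a b c d z k ^ p k) := by
    rw [tsum_congr (fun mq => F_Em a b c d z mq)]
    rw [← tsum_mul_tsum_of_summable_norm
      (f := fun ε : Fin N → Fin 2 => F a b c d z (fun k => ((ε k : ℕ))))
      (g := fun p : Fin N → ℕ => ∏ k, xfac a b c d z k ^ p k)
      Summable.of_finite
      (by simp only [Real.norm_eq_abs]; exact hGS)]
  have hPsi : Psi a b c d z N = ∑' ε : Fin N → Fin 2, F a b c d z (fun k => ((ε k : ℕ))) := by
    unfold Psi
    letI : Fintype {μ : IntPartition // μ.Strict ∧ μ.parts 0 ≤ N} :=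
      Fintype.ofEquiv _ (SE N)
    rw [finsum_eq_sum_of_fintype, tsum_fintype]
    exact (Fintype.sum_equiv (SE N)
      (fun ε : Fin N → Fin 2 => F a b c d z (fun k => ((ε k : ℕ))))
      (fun μ : {μ : IntPartition // μ.Strict ∧ μ.parts 0 ≤ N} =>
        IntPartition.weight a b c d μ.1 * z ^ μ.1.length)
      (fun ε => rfl)).symm
  have hgeoT : ∀ k : Fin N, ∑' j : ℕ, xfac a b c d z k ^ j = (1 - xfac a b c d z k)⁻¹ :=
    fun k => tsum_geometric_of_abs_lt_one (hx k)
  have hprodpos : ∀ k : Fin N, 0 < 1 - xfac a b c d z k := by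
    intro k
    have := abs_lt.mp (hx k)
    linarith [this.2]
  have hprodne : (∏ k : Fin N, (1 - xfac a b c d z k)) ≠ 0 :=
    Finset.prod_ne_zero_iff.mpr (fun k _ => ne_of_gt (hprodpos k))
  have hden : poch (z ^ 2 * (a*b*c*d)) (a*b*c*d) (N / 2)
      * poch (z ^ 2 * a * c) (a*b*c*d) ((N + 1) / 2)
      = ∏ k : Fin N, (1 - xfac a b c d z k) := poch_prod a b c d z N
  rw [hT1, hT2, hT3, ← hPsi, hGT, hden]
  rw [Finset.prod_congr rfl (fun k (_ : k ∈ Finset.univ) => hgeoT k),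
    Finset.prod_inv_distrib, ← div_eq_mul_inv]
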